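/- The infinite product over integers n ≥ 4 of (1 - (3n-1)/(n-1)^3) equals 2/9. -/

import Mathlib

open Filter Real

private noncomputable def hl3f (m : ℕ) : ℝ :=
  1 - (3 * ((m : ℝ) + 4) - 1) / (((m : ℝ) + 4) - 1) ^ 3

private lemma hl3f_eq (m : ℕ) :
    hl3f m = ((m : ℝ) + 4) ^ 2 * ((m : ℝ) + 1) / ((m : ℝ) + 3) ^ 3 := by
  have h : ((m : ℝ) + 3) ≠ 0 := by positivity
  unfold hl3f
  have e : (((m : ℝ) + 4) - 1) = ((m : ℝ) + 3) := by ring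
  rw [e]
  field_simp
  ring

private lemma hl3f_pos (m : ℕ) : 0 < hl3f m := by
  rw [hl3f_eq]; positivity

private lemma hl3_prod (k : ℕ) :
    ∏ i ∈ Finset.range k, hl3f i
      = 2 * ((k : ℝ) + 3) ^ 2 / (9 * ((k : ℝ) + 1) * ((k : ℝ) + 2)) := by
  induction k with
  | zero => norm_num
  | succ k ih =>
    rw [Finset.prod_range_succ, ih, hl3f_eq]
    have h1 : ((k : ℝ) + 1) ≠ 0 := by positivity
    have h2 : ((k : ℝ) + 2) ≠ 0 := by positivity
    have h3 : ((k : ℝ) + 3) ≠ 0 := by positivity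
    push_cast
    field_simp
    ring

private lemma hl3_tendsto :
    Tendsto (fun k : ℕ => ∏ i ∈ Finset.range k, hl3f i) atTop (nhds (2 / 9)) := by
  simp only [hl3_prod]
  have h0 : Tendsto (fun k : ℕ => 1 / ((k : ℝ) + 1)) atTop (nhds 0) :=
    tendsto_one_div_add_atTop_nhds_zero_nat
  have h1 : Tendsto (fun k : ℕ => ((k : ℝ) + 3) / ((k : ℝ) + 1)) atTop (nhds 1) := by
    have : (fun k : ℕ => ((k : ℝ) + 3) / ((k : ℝ) + 1))
        = fun k : ℕ => 1 + 2 * (1 / ((k : ℝ) + 1)) := by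
      funext k
      have : ((k : ℝ) + 1) ≠ 0 := by positivity
      field_simp
      ring
    rw [this]
    simpa using tendsto_const_nhds.add ((h0.const_mul 2))
  have h2 : Tendsto (fun k : ℕ => ((k : ℝ) + 3) / ((k : ℝ) + 2)) atTop (nhds 1) := by
    have h0' : Tendsto (fun k : ℕ => 1 / ((k : ℝ) + 2)) atTop (nhds 0) := by
      have h := h0.comp (tendsto_add_atTop_nat 1)
      have heq : (fun k : ℕ => 1 / ((k : ℝ) + 2))
          = (fun k : ℕ => 1 / ((k : ℝ) + 1)) ∘ (· + 1) := by
        funext k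
        simp only [Function.comp]
        push_cast
        ring_nf
      rw [heq]
      exact h
    have : (fun k : ℕ => ((k : ℝ) + 3) / ((k : ℝ) + 2))
        = fun k : ℕ => 1 + 1 / ((k : ℝ) + 2) := by
      funext k
      have : ((k : ℝ) + 2) ≠ 0 := by positivity
      field_simp
      ring
    rw [this]
    simpa using tendsto_const_nhds.add h0'
  have key : Tendsto (fun k : ℕ =>
      (2 / 9) * (((k : ℝ) + 3) / ((k : ℝ) + 1) * (((k : ℝ) + 3) / ((k : ℝ) + 2))))
      atTop (nhds ((2 / 9) * (1 * 1))) :=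
    ((h1.mul h2)).const_mul _
  have heq : (fun k : ℕ =>
      (2 / 9) * (((k : ℝ) + 3) / ((k : ℝ) + 1) * (((k : ℝ) + 3) / ((k : ℝ) + 2))))
      = fun k : ℕ => 2 * ((k : ℝ) + 3) ^ 2 / (9 * ((k : ℝ) + 1) * ((k : ℝ) + 2)) := by
    funext k
    have hk1 : ((k : ℝ) + 1) ≠ 0 := by positivity
    have hk2 : ((k : ℝ) + 2) ≠ 0 := by positivity
    field_simp
  rw [heq] at key
  simpa using key

private lemma hl3_summable_log : Summable (fun m => Real.log (hl3f m)) := by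
  rw [← summable_neg_iff]
  apply summable_of_sum_range_le (c := -Real.log (2 / 9))
  · intro m
    simp only [neg_nonneg]
    apply Real.log_nonpos (le_of_lt (hl3f_pos m))
    unfold hl3f
    have e : (((m : ℝ) + 4) - 1) ^ 3 = ((m : ℝ) + 3) ^ 3 := by ring
    rw [e]
    have h2 : (0 : ℝ) ≤ (3 * ((m : ℝ) + 4) - 1) / ((m : ℝ) + 3) ^ 3 := by
      apply div_nonneg
      · nlinarith [Nat.cast_nonneg (α := ℝ) m]
      · positivity
    linarith
  · intro n
    rw [Finset.sum_neg_distrib, neg_le_neg_iff,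
      ← Real.log_prod (fun i _ => (hl3f_pos i).ne')]
    apply Real.log_le_log (by norm_num)
    rw [hl3_prod]
    rw [div_le_div_iff₀ (by positivity) (by positivity)]
    nlinarith [Nat.cast_nonneg (α := ℝ) n]

private lemma hl3_hasProd : HasProd hl3f (2 / 9) := by
  have hsum : HasSum (fun m => Real.log (hl3f m)) (Real.log (2 / 9)) := by
    rw [hl3_summable_log.hasSum_iff_tendsto_nat]
    have : (fun n : ℕ => ∑ i ∈ Finset.range n, Real.log (hl3f i))
        = fun n : ℕ => Real.log (∏ i ∈ Finset.range n, hl3f i) := by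
      funext n
      exact (Real.log_prod (fun i _ => (hl3f_pos i).ne')).symm
    rw [this]
    exact (Real.continuousAt_log (by norm_num)).tendsto.comp hl3_tendsto
  have := hsum.rexp
  have heq : (Real.exp ∘ fun m => Real.log (hl3f m)) = hl3f := by
    funext m
    simp [Real.exp_log (hl3f_pos m)]
  rw [heq, Real.exp_log (by norm_num : (0:ℝ) < 2/9)] at this
  exact this

/-- `∏_{n ≥ 4} (1 - (3n-1)/(n-1)^3) = 2/9`. -/
theorem hardy_littlewood_three :
    ∏' m : ℕ, (1 - (3 * ((m : ℝ) + 4) - 1) / (((m : ℝ) + 4) - 1) ^ 3) = 2 / 9 := by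
  exact hl3_hasProd.tprod_eq
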